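/- Let Σ be an alphabet and let w be a word over Σ, let ℓ ≥ 1, and let A, B ⊆ Σ* be languages with [] ∉ B. Let N_C be an ε-NFA over Σ with state type σ_C whose accepted language is C, and let N_D be an ε-NFA over Σ with state type σ_D whose accepted language is D. Assume: (i) for all positions 0 ≤ p < q such that the suffix of w starting at position q has length at least ℓ+1, that suffix is not a prefix of the suffix of w starting at position p; and (ii) every word in D has length at least ℓ+1. For an ε-NFA N, a state q and a set of states F, write N[start:={q}] for N with its start set replaced by {q} and N[accept:=F] for N with its accepting set replaced by F. Then the following are equivalent: (1) there exist a ∈ A, b ∈ B, c ∈ C, d ∈ D with w = a ++ b ++ c ++ b ++ d; (2) at least one of the following holds: (2a) [XYYZ case] there exist an accepting state f_C of N_C, a state q_D of N_D, and words a, u, z with w = a ++ u ++ u ++ z, a ∈ A, u ∈ B · (accepts(N_C[accept:={f_C}]) ∩ accepts(N_D[accept:={q_D}])), and z ∈ accepts(N_D[start:={q_D}]); (2b) [branching case] there exist a state q_C of N_C, a state q_D of N_D, and words a, u, c', d' with w = a ++ u ++ c' ++ u ++ d', a ∈ A, u ∈ B · (accepts(N_C[accept:={q_C}]) ∩ accepts(N_D[accept:={q_D}])),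 c' ∈ accepts(N_C[start:={q_C}]), d' ∈ accepts(N_D[start:={q_D}]), both c' and d' are nonempty, and the first letters of c' and d' are different. -/

import Mathlib

open Set

namespace εNFA

variable {α : Type*} {σ : Type*} (M : εNFA α σ)

theorem myClosure_mono {S T : Set σ} (h : S ⊆ T) : M.εClosure S ⊆ M.εClosure T := by
  intro s hs
  induction hs with
  | base s h' => exact εClosure.base s (h h')
  | step s t ht _ ih => exact εClosure.step s t ht ih

theorem myClosure_idem (S : Set σ) : M.εClosure (M.εClosure S) = M.εClosure S := by
  refine Subset.antisymm ?_ (subset_εClosure _ _)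
  intro s hs
  induction hs with
  | base s h' => exact h'
  | step s t ht _ ih => exact εClosure.step s t ht ih

theorem myClosure_stepSet (S : Set σ) (a : α) :
    M.εClosure (M.stepSet S a) = M.stepSet S a := by
  refine Subset.antisymm ?_ (subset_εClosure _ _)
  intro s hs
  induction hs with
  | base s h' => exact h'
  | step s t ht _ ih =>
      rcases mem_stepSet_iff.1 ih with ⟨q, hq, hs'⟩
      exact mem_stepSet_iff.2 ⟨q, hq, εClosure.step s t ht hs'⟩

theorem myClosure_evalFrom (S : Set σ) (x : List α) :
    M.εClosure (M.evalFrom S x) = M.evalFrom S x := by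
  rcases List.eq_nil_or_concat x with rfl | ⟨y, a, rfl⟩
  · simp [myClosure_idem]
  · rw [List.concat_eq_append, evalFrom_append_singleton, myClosure_stepSet]

theorem myEvalFrom_append (S : Set σ) (x y : List α) :
    M.evalFrom S (x ++ y) = M.evalFrom (M.evalFrom S x) y := by
  show List.foldl M.stepSet (M.εClosure S) (x ++ y) = _
  rw [List.foldl_append]
  show _ = List.foldl M.stepSet (M.εClosure (M.evalFrom S x)) y
  rw [myClosure_evalFrom]
  rfl

theorem myFoldl_mono {S T : Set σ} (h : S ⊆ T) (x : List α) :
    List.foldl M.stepSet S x ⊆ List.foldl M.stepSet T x := by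
  induction x generalizing S T with
  | nil => exact h
  | cons a x ih =>
      refine ih ?_
      exact Set.iUnion₂_mono' fun s hs => ⟨s, h hs, subset_rfl⟩

theorem myEvalFrom_mono {S T : Set σ} (h : S ⊆ T) (x : List α) :
    M.evalFrom S x ⊆ M.evalFrom T x :=
  myFoldl_mono M (myClosure_mono M h) x

theorem myClosure_iUnion {ι : Sort*} (S : ι → Set σ) :
    M.εClosure (⋃ i, S i) = ⋃ i, M.εClosure (S i) := by
  refine Subset.antisymm ?_ (iUnion_subset fun i => myClosure_mono M (subset_iUnion S i))
  intro s hs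
  induction hs with
  | base s h' =>
      rcases mem_iUnion.1 h' with ⟨i, hi⟩
      exact mem_iUnion.2 ⟨i, εClosure.base s hi⟩
  | step s t ht _ ih =>
      rcases mem_iUnion.1 ih with ⟨i, hi⟩
      exact mem_iUnion.2 ⟨i, εClosure.step s t ht hi⟩

theorem myStepSet_iUnion {ι : Sort*} (S : ι → Set σ) (a : α) :
    M.stepSet (⋃ i, S i) a = ⋃ i, M.stepSet (S i) a := by
  ext s
  simp [stepSet, mem_iUnion]
  tauto

theorem myFoldl_iUnion {ι : Sort*} (S : ι → Set σ) (x : List α) :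
    List.foldl M.stepSet (⋃ i, S i) x = ⋃ i, List.foldl M.stepSet (S i) x := by
  induction x generalizing S with
  | nil => rfl
  | cons a x ih => simp only [List.foldl_cons, myStepSet_iUnion, ih]

theorem myEvalFrom_iUnion {ι : Sort*} (S : ι → Set σ) (x : List α) :
    M.evalFrom (⋃ i, S i) x = ⋃ i, M.evalFrom (S i) x := by
  show List.foldl _ (M.εClosure _) _ = _
  rw [myClosure_iUnion, myFoldl_iUnion]
  rfl

theorem myMem_evalFrom_iff_exists {T : Set σ} {x : List α} {f : σ} :
    f ∈ M.evalFrom T x ↔ ∃ q ∈ T, f ∈ M.evalFrom {q} x := by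
  conv_lhs => rw [← Set.iUnion_of_singleton_coe T]
  rw [myEvalFrom_iUnion]
  simp

/-- changing start/accept doesn't change εClosure -/
theorem myClosure_congr {M' : εNFA α σ} (h : M.step = M'.step) (S : Set σ) :
    M.εClosure S = M'.εClosure S := by
  ext s
  constructor
  · intro hs
    induction hs with
    | base s h' => exact εClosure.base s h'
    | step s t ht _ ih => exact εClosure.step s t (h ▸ ht) ih
  · intro hs
    induction hs with
    | base s h' => exact εClosure.base s h'
    | step s t ht _ ih => exact εClosure.step s t (h.symm ▸ ht) ih

theorem myEvalFrom_congr {M' : εNFA α σ} (h : M.step = M'.step) (S : Set σ) (x : List α) :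
    M.evalFrom S x = M'.evalFrom S x := by
  have hstep : M.stepSet = M'.stepSet := by
    funext T a
    simp only [stepSet, h, myClosure_congr M h]
  show List.foldl M.stepSet (M.εClosure S) x = List.foldl M'.stepSet (M'.εClosure S) x
  rw [hstep, myClosure_congr M h]

theorem mem_accepts_accept_singleton (q : σ) (x : List α) :
    x ∈ ({ M with accept := {q} } : εNFA α σ).accepts ↔ q ∈ M.evalFrom M.start x := by
  have := myEvalFrom_congr (M := ({ M with accept := {q} } : εNFA α σ)) (M' := M) rfl M.start x
  constructor
  · rintro ⟨f, hf, hmem⟩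
    rcases hf with rfl
    rwa [εNFA.eval, this] at hmem
  · intro h
    exact ⟨q, rfl, by rwa [εNFA.eval, this]⟩

theorem mem_accepts_start_singleton (q : σ) (x : List α) :
    x ∈ ({ M with start := {q} } : εNFA α σ).accepts ↔ ∃ f ∈ M.accept, f ∈ M.evalFrom {q} x := by
  have h := myEvalFrom_congr (M := ({ M with start := {q} } : εNFA α σ)) (M' := M) rfl {q} x
  constructor
  · rintro ⟨f, hf, hmem⟩
    have hmem' : f ∈ ({ M with start := {q} } : εNFA α σ).evalFrom {q} x := hmem
    exact ⟨f, hf, h ▸ hmem'⟩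
  · rintro ⟨f, hf, hmem⟩
    have hmem' : f ∈ ({ M with start := {q} } : εNFA α σ).evalFrom {q} x := h ▸ hmem
    exact ⟨f, hf, hmem'⟩

/-- split an accepting run at a prefix -/
theorem accepts_split {x y : List α} (h : x ++ y ∈ M.accepts) :
    ∃ q : σ, x ∈ ({ M with accept := {q} } : εNFA α σ).accepts ∧
      y ∈ ({ M with start := {q} } : εNFA α σ).accepts := by
  rcases h with ⟨f, hf, hmem⟩
  rw [εNFA.eval, myEvalFrom_append] at hmem
  rcases (myMem_evalFrom_iff_exists M).1 hmem with ⟨q, hq, hfq⟩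
  exact ⟨q, (mem_accepts_accept_singleton M q x).2 hq,
    (mem_accepts_start_singleton M q y).2 ⟨f, hf, hfq⟩⟩

/-- compose runs -/
theorem accepts_comp {x y : List α} {q : σ}
    (hx : x ∈ ({ M with accept := {q} } : εNFA α σ).accepts)
    (hy : y ∈ ({ M with start := {q} } : εNFA α σ).accepts) :
    x ++ y ∈ M.accepts := by
  rw [mem_accepts_accept_singleton] at hx
  rcases (mem_accepts_start_singleton M q y).1 hy with ⟨f, hf, hfq⟩
  refine ⟨f, hf, ?_⟩
  rw [εNFA.eval, myEvalFrom_append]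
  exact myEvalFrom_mono M (Set.singleton_subset_iff.2 hx) y hfq

theorem accepts_of_accept_mem {q : σ} (hq : q ∈ M.accept) {x : List α}
    (hx : x ∈ ({ M with accept := {q} } : εNFA α σ).accepts) : x ∈ M.accepts :=
  ⟨q, hq, (mem_accepts_accept_singleton M q x).1 hx⟩

end εNFA

theorem common_prefix_trichotomy {α : Type*} :
    ∀ c d : List α, c <+: d ∨ d <+: c ∨
      ∃ s c' d', c = s ++ c' ∧ d = s ++ d' ∧ c' ≠ [] ∧ d' ≠ [] ∧ c'.head? ≠ d'.head?
  | [], d => Or.inl ⟨d, rfl⟩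
  | x :: c, [] => Or.inr (Or.inl ⟨x :: c, rfl⟩)
  | x :: c, y :: d => by
    by_cases hxy : x = y
    · subst hxy
      rcases common_prefix_trichotomy c d with ⟨t, rfl⟩ | ⟨t, rfl⟩ |
        ⟨s, c', d', hc, hd, h1, h2, h3⟩
      · exact Or.inl ⟨t, rfl⟩
      · exact Or.inr (Or.inl ⟨t, rfl⟩)
      · exact Or.inr (Or.inr ⟨x :: s, c', d', by simp [hc], by simp [hd], h1, h2, h3⟩)
    · exact Or.inr (Or.inr ⟨[], x :: c, y :: d, rfl, rfl, by simp, by simp, by simp [hxy]⟩)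

/-- Product of two languages: `{u ++ v : u ∈ L₁, v ∈ L₂}`. -/
def setMul {α : Type*} (L₁ L₂ : Set (List α)) : Set (List α) :=
  {x | ∃ u ∈ L₁, ∃ v ∈ L₂, x = u ++ v}

theorem stmt0 {α σC σD : Type*} (w : List α) (ℓ : ℕ) (hℓ : 1 ≤ ℓ)
    (A B : Set (List α)) (hB : ([] : List α) ∉ B)
    (NC : εNFA α σC) (ND : εNFA α σD)
    (hnopre : ∀ p q : ℕ, p < q → ℓ + 1 ≤ (w.drop q).length →
      ¬ (w.drop q <+: w.drop p))
    (hD : ∀ d ∈ ND.accepts, ℓ + 1 ≤ d.length) :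
    (∃ a ∈ A, ∃ b ∈ B, ∃ c ∈ NC.accepts, ∃ d ∈ ND.accepts,
        w = a ++ b ++ c ++ b ++ d) ↔
      ((∃ fC ∈ NC.accept, ∃ qD : σD, ∃ a u z : List α,
          w = a ++ u ++ u ++ z ∧ a ∈ A ∧
          u ∈ setMul B
            {x | x ∈ ({ NC with accept := {fC} } : εNFA α σC).accepts ∧
                 x ∈ ({ ND with accept := {qD} } : εNFA α σD).accepts} ∧
          z ∈ ({ ND with start := {qD} } : εNFA α σD).accepts) ∨
        (∃ (qC : σC) (qD : σD), ∃ a u c' d' : List α,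
          w = a ++ u ++ c' ++ u ++ d' ∧ a ∈ A ∧
          u ∈ setMul B
            {x | x ∈ ({ NC with accept := {qC} } : εNFA α σC).accepts ∧
                 x ∈ ({ ND with accept := {qD} } : εNFA α σD).accepts} ∧
          c' ∈ ({ NC with start := {qC} } : εNFA α σC).accepts ∧
          d' ∈ ({ ND with start := {qD} } : εNFA α σD).accepts ∧
          c' ≠ [] ∧ d' ≠ [] ∧ c'.head? ≠ d'.head?)) := by
  constructor
  · rintro ⟨a, ha, b, hb, c, hc, d, hd, rfl⟩
    have hbne : b ≠ [] := fun h => hB (h ▸ hb)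
    rcases common_prefix_trichotomy c d with ⟨z, rfl⟩ | ⟨t, rfl⟩ |
      ⟨s, c', d', rfl, rfl, hc'ne, hd'ne, hhead⟩
    · -- c is a prefix of d : case 2a
      obtain ⟨qD, hcD, hz⟩ := ND.accepts_split hd
      obtain ⟨fC, hfC, hceval⟩ := hc
      refine Or.inl ⟨fC, hfC, qD, a, b ++ c, z, by simp [List.append_assoc], ha,
        ⟨b, hb, c, ⟨(εNFA.mem_accepts_accept_singleton NC fC c).2 hceval, hcD⟩, rfl⟩, hz⟩
    · -- d is a prefix of c : contradiction
      exfalso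
      set W := a ++ b ++ (d ++ t) ++ b ++ d with hW
      have hq : W.drop (a ++ b ++ (d ++ t) ++ b).length = d := List.drop_left
      have hp : W.drop (a ++ b).length = (d ++ t) ++ (b ++ d) := by
        rw [show W = (a ++ b) ++ ((d ++ t) ++ (b ++ d)) by simp [hW, List.append_assoc]]
        exact List.drop_left
      have hlt : (a ++ b).length < (a ++ b ++ (d ++ t) ++ b).length := by
        have := List.length_pos_iff.2 hbne
        simp only [List.length_append]
        omega
      refine hnopre _ _ hlt (by rw [hq]; exact hD d hd) ?_
      rw [hq, hp]
      exact ⟨t ++ (b ++ d), by simp [List.append_assoc]⟩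
    · -- proper branching : case 2b
      obtain ⟨qC, hsC, hc'⟩ := NC.accepts_split hc
      obtain ⟨qD, hsD, hd'⟩ := ND.accepts_split hd
      exact Or.inr ⟨qC, qD, a, b ++ s, c', d', by simp [List.append_assoc], ha,
        ⟨b, hb, s, ⟨hsC, hsD⟩, rfl⟩, hc', hd', hc'ne, hd'ne, hhead⟩
  · rintro (⟨fC, hfC, qD, a, u, z, rfl, ha, ⟨b, hb, x, ⟨hxC, hxD⟩, rfl⟩, hz⟩ |
        ⟨qC, qD, a, u, c', d', rfl, ha, ⟨b, hb, x, ⟨hxC, hxD⟩, rfl⟩, hc', hd', _, _, _⟩)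
    · exact ⟨a, ha, b, hb, x, NC.accepts_of_accept_mem hfC hxC, x ++ z,
        ND.accepts_comp hxD hz, by simp [List.append_assoc]⟩
    · exact ⟨a, ha, b, hb, x ++ c', NC.accepts_comp hxC hc', x ++ d',
        ND.accepts_comp hxD hd', by simp [List.append_assoc]⟩
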